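/- arXiv:1911.13024 — 14 statements merged into one kernel-verified Lean document; each statement's English description precedes it below -/
import Mathlib

section
/- Let AF = (AR, Attacks) and AF' = (AR', Attacks') be argumentation frameworks with AF ≼_N AF', and let 𝒮 be a family of maximal conflict-free sets of AF and 𝒮' a family of maximal conflict-free sets of AF'. If for every E ∈ 𝒮 there exists E' ∈ 𝒮' with E ⊆ E' (the weak monotony condition), then for every E ∈ 𝒮 there exists E' ∈ 𝒮' such that E' ⊄ AR or E' = E (the weak reference independence condition). -/
/-- An (abstract) argumentation framework: a finite set of arguments
together with an attack relation on those arguments. -/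
structure ArgFramework (α : Type*) where
  args : Set α
  att : Set (α × α)
  args_finite : args.Finite
  att_sub : att ⊆ args ×ˢ args

namespace ArgFramework

variable {α : Type*}

/-- `S` is conflict-free: no member of `S` attacks a member of `S`. -/
def ConflictFree (F : ArgFramework α) (S : Set α) : Prop :=
  S ⊆ F.args ∧ ∀ a ∈ S, ∀ b ∈ S, (a, b) ∉ F.att

/-- `S` is a maximal (w.r.t. set inclusion) conflict-free set. -/
def MaxConflictFree (F : ArgFramework α) (S : Set α) : Prop :=
  F.ConflictFree S ∧ ∀ T, F.ConflictFree T → S ⊆ T → S = T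

/-- Naive extensions are exactly the maximal conflict-free sets. -/
def NaiveExt (F : ArgFramework α) (S : Set α) : Prop :=
  F.MaxConflictFree S

/-- The range of `S`: `S` together with all arguments attacked by `S`. -/
def range (F : ArgFramework α) (S : Set α) : Set α :=
  S ∪ {b | ∃ a ∈ S, (a, b) ∈ F.att}

/-- `S` is a stage extension: a conflict-free set whose range is maximal
(w.r.t. set inclusion) among ranges of conflict-free sets. -/
def StageExt (F : ArgFramework α) (S : Set α) : Prop :=
  F.ConflictFree S ∧ ¬ ∃ T, F.ConflictFree T ∧ F.range S ⊂ F.range T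

/-- `S` is admissible: conflict-free, and every attacker of a member of `S`
is attacked by some member of `S`. -/
def Admissible (F : ArgFramework α) (S : Set α) : Prop :=
  F.ConflictFree S ∧ ∀ a ∈ S, ∀ b, (b, a) ∈ F.att → ∃ c ∈ S, (c, b) ∈ F.att

/-- `S` is a maximal (w.r.t. set inclusion) admissible set. -/
def MaxAdmissible (F : ArgFramework α) (S : Set α) : Prop :=
  F.Admissible S ∧ ∀ T, F.Admissible T → S ⊆ T → S = T

/-- Preferred extensions are the maximal admissible sets. -/
def PreferredExt (F : ArgFramework α) (S : Set α) : Prop :=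
  F.MaxAdmissible S

/-- `a` is acceptable w.r.t. `S`: every attacker of `a` is attacked by `S`. -/
def Acceptable (F : ArgFramework α) (S : Set α) (a : α) : Prop :=
  ∀ b, (b, a) ∈ F.att → ∃ c ∈ S, (c, b) ∈ F.att

/-- `S` is a complete extension: admissible and containing every argument
acceptable w.r.t. `S`. -/
def CompleteExt (F : ArgFramework α) (S : Set α) : Prop :=
  F.Admissible S ∧ ∀ a ∈ F.args, F.Acceptable S a → a ∈ S

/-- `S` is the grounded extension: the minimal complete extension. -/
def GroundedExt (F : ArgFramework α) (S : Set α) : Prop :=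
  F.CompleteExt S ∧ ∀ T, F.CompleteExt T → S ⊆ T

/-- `S` is a stable extension: conflict-free and attacking every outside argument. -/
def StableExt (F : ArgFramework α) (S : Set α) : Prop :=
  F.ConflictFree S ∧ ∀ b ∈ F.args \ S, ∃ a ∈ S, (a, b) ∈ F.att

/-- `F'` is a normal expansion of `F`: arguments and attacks are only added,
and no added attack is between two arguments of `F`. -/
def NormalExpansion (F F' : ArgFramework α) : Prop :=
  F.args ⊆ F'.args ∧ F.att ⊆ F'.att ∧
    ∀ a b, (a, b) ∈ F'.att → (a, b) ∉ F.att → ¬(a ∈ F.args ∧ b ∈ F.args)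

/-- An attack sequence: a nonempty sequence of pairwise distinct arguments
in which each argument attacks its successor. -/
def AttackSeq (F : ArgFramework α) (l : List α) : Prop :=
  l ≠ [] ∧ l.Nodup ∧ (∀ a ∈ l, a ∈ F.args) ∧
    l.Chain' (fun a b => (a, b) ∈ F.att)

/-- `b` is reachable from `a`: there is an attack sequence from `a` to `b`. -/
def Reachable (F : ArgFramework α) (a b : α) : Prop :=
  ∃ l : List α, F.AttackSeq l ∧ l.head? = some a ∧ l.getLast? = some b

/-- An attack cycle: a sequence `a₁, …, aₙ` (n ≥ 2) of arguments in which each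
argument attacks its successor, `a₁ = aₙ`, and `a₁, …, a_{n-1}` are pairwise
distinct. -/
def AttackCycle (F : ArgFramework α) (l : List α) : Prop :=
  2 ≤ l.length ∧ (∀ a ∈ l, a ∈ F.args) ∧
    l.Chain' (fun a b => (a, b) ∈ F.att) ∧
    l.head? = l.getLast? ∧ l.dropLast.Nodup

/-- `F'` is a non-cyclic expansion of `F`: an expansion whose attack cycles
are exactly the attack cycles of `F`. -/
def NonCyclicExpansion (F F' : ArgFramework α) : Prop :=
  F.args ⊆ F'.args ∧ F.att ⊆ F'.att ∧
    ∀ l, F'.AttackCycle l ↔ F.AttackCycle l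

/-- `F'` is a rational man's expansion of `F`: a normal, non-cyclic expansion
such that no added argument reachable from an initial argument `a` allows `a`
to occur in any attack cycle of `F'`. -/
def RationalManExpansion (F F' : ArgFramework α) : Prop :=
  F.NormalExpansion F' ∧ F.NonCyclicExpansion F' ∧
    ∀ a ∈ F.args, ∀ b ∈ F'.args \ F.args, F'.Reachable a b →
      ∀ l, F'.AttackCycle l → a ∉ l

end ArgFramework

/-- For families of maximal conflict-free sets of `AF` and of a
normal expansion `AF'`, the weak monotony condition implies the weak
reference independence condition. -/
theorem weak_monotony_implies_weak_reference_independence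
    {α : Type*} (F F' : ArgFramework α)
    (hN : F.NormalExpansion F')
    (S S' : Set (Set α))
    (hS : ∀ E ∈ S, F.MaxConflictFree E)
    (hS' : ∀ E' ∈ S', F'.MaxConflictFree E')
    (hWM : ∀ E ∈ S, ∃ E' ∈ S', E ⊆ E') :
    ∀ E ∈ S, ∃ E' ∈ S', ¬ E' ⊆ F.args ∨ E' = E := by
  intro E hE
  obtain ⟨E', hE'S, hsub⟩ := hWM E hE
  refine ⟨E', hE'S, ?_⟩
  by_cases h : E' ⊆ F.args
  · right
    -- E' is conflict-free in F
    have hcf' : F'.ConflictFree E' := (hS' E' hE'S).1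
    have hcfF : F.ConflictFree E' := by
      refine ⟨h, fun a ha b hb hab => ?_⟩
      exact hcf'.2 a ha b hb (hN.2.1 hab)
    exact ((hS E hE).2 E' hcfF hsub).symm
  · exact Or.inl h
end

section
/- Let AF = (AR, Attacks) and AF' = (AR', Attacks') be argumentation frameworks with AF ≼_N AF', and let 𝒮 be a family of maximal conflict-free sets of AF and 𝒮' a family of maximal conflict-free sets of AF'. If for every E ∈ 𝒮 and every E' ∈ 𝒮' it holds that E ⊆ E' (the strong monotony condition), then for every E ∈ 𝒮 and every E' ∈ 𝒮' it holds that E' ⊄ AR or E' = E (the strong reference independence condition). -/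
/-- For families of maximal conflict-free sets of `AF` and of a
normal expansion `AF'`, the strong monotony condition implies the strong
reference independence condition. -/
theorem strong_monotony_implies_strong_reference_independence
    {α : Type*} (F F' : ArgFramework α)
    (hN : F.NormalExpansion F')
    (S S' : Set (Set α))
    (hS : ∀ E ∈ S, F.MaxConflictFree E)
    (hS' : ∀ E' ∈ S', F'.MaxConflictFree E')
    (hSM : ∀ E ∈ S, ∀ E' ∈ S', E ⊆ E') :
    ∀ E ∈ S, ∀ E' ∈ S', ¬ E' ⊆ F.args ∨ E' = E := by
  intro E hE E' hE'
  by_cases h : E' ⊆ F.args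
  · right
    have hcf' : F'.ConflictFree E' := (hS' E' hE').1
    have hcf : F.ConflictFree E' := by
      refine ⟨h, fun a ha b hb hab => hcf'.2 a ha b hb (hN.2.1 hab)⟩
    exact ((hS E hE).2 E' hcf (hSM E hE E' hE')).symm
  · left; exact h
end

section
/- Let AF = (AR, Attacks) and AF' = (AR', Attacks') be argumentation frameworks with AF ≼_N AF', let 𝒮 be a family of maximal conflict-free sets of AF and 𝒮' a family of maximal conflict-free sets of AF', and let U = ⋃_{E' ∈ 𝒮'} (E' \ AR). If for every E ∈ 𝒮 the following holds: whenever there is no (a, b) ∈ Attacks' with a ∈ U and b ∈ E, there exists E' ∈ 𝒮' with E ⊆ E' (the weak rational monotony condition), then for every E ∈ 𝒮 there exists E' ∈ 𝒮' such that E' ⊄ AR or E' = E (the weak reference independence condition). -/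
/-- For families of maximal conflict-free sets of `AF` and of a
normal expansion `AF'`, the weak rational monotony condition implies the weak
reference independence condition. -/
theorem weak_rational_monotony_implies_weak_reference_independence
    {α : Type*} (F F' : ArgFramework α)
    (hN : F.NormalExpansion F')
    (S S' : Set (Set α))
    (hS : ∀ E ∈ S, F.MaxConflictFree E)
    (hS' : ∀ E' ∈ S', F'.MaxConflictFree E')
    (hWRM : ∀ E ∈ S,
      (¬ ∃ a b, (a, b) ∈ F'.att ∧ a ∈ (⋃ E' ∈ S', E' \ F.args) ∧ b ∈ E) →
      ∃ E' ∈ S', E ⊆ E') :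
    ∀ E ∈ S, ∃ E' ∈ S', ¬ E' ⊆ F.args ∨ E' = E := by
  intro E hE
  by_cases hP : ∃ a b, (a, b) ∈ F'.att ∧ a ∈ (⋃ E' ∈ S', E' \ F.args) ∧ b ∈ E
  · obtain ⟨a, b, -, ha, -⟩ := hP
    simp only [Set.mem_iUnion] at ha
    obtain ⟨E', hE', haE'⟩ := ha
    exact ⟨E', hE', Or.inl fun h => haE'.2 (h haE'.1)⟩
  · obtain ⟨E', hE', hsub⟩ := hWRM E hE hP
    by_cases hA : E' ⊆ F.args
    · refine ⟨E', hE', Or.inr ?_⟩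
      have hcf : F.ConflictFree E' :=
        ⟨hA, fun a ha b hb hab => (hS' E' hE').1.2 a ha b hb (hN.2.1 hab)⟩
      exact ((hS E hE).2 E' hcf hsub).symm
    · exact ⟨E', hE', Or.inl hA⟩
end

section
/- There exist argumentation frameworks AF = (AR, Attacks) and AF' = (AR', Attacks') with AF ≼_N AF', together with nonempty families 𝒮 of maximal conflict-free sets of AF and 𝒮' of maximal conflict-free sets of AF', such that for every E ∈ 𝒮 there exists E' ∈ 𝒮' with E' ⊄ AR or E' = E (the weak reference independence condition holds), yet there exists E ∈ 𝒮 such that no E' ∈ 𝒮' satisfies E ⊆ E' (the weak monotony condition fails). A witness is AF = ({a}, ∅), AF' = ({a, b}, {(b, a)}), 𝒮 = {{a}}, 𝒮' = {{b}}. -/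
/-- Weak reference independence does not imply weak monotony:
there are a framework, a normal expansion, and nonempty families of maximal
conflict-free sets of each, satisfying the weak reference independence
condition but violating the weak monotony condition. -/
theorem weak_reference_independence_not_implies_weak_monotony :
    ∃ (F F' : ArgFramework ℕ) (S S' : Set (Set ℕ)),
      F.NormalExpansion F' ∧
      S.Nonempty ∧ S'.Nonempty ∧
      (∀ E ∈ S, F.MaxConflictFree E) ∧
      (∀ E' ∈ S', F'.MaxConflictFree E') ∧
      (∀ E ∈ S, ∃ E' ∈ S', ¬ E' ⊆ F.args ∨ E' = E) ∧
      (∃ E ∈ S, ∀ E' ∈ S', ¬ E ⊆ E') := by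
  classical
  refine ⟨⟨{0}, ∅, Set.finite_singleton 0, by simp⟩,
    ⟨{0, 1}, {(1, 0)}, (Set.finite_singleton 0).insert 1 |>.subset (by intro x hx; simp at hx; rcases hx with h | h <;> simp [h]),
      by intro p hp; simp at hp; subst hp; simp⟩,
    {({0} : Set ℕ)}, {({1} : Set ℕ)}, ?_, ⟨_, rfl⟩, ⟨_, rfl⟩, ?_, ?_, ?_, ?_⟩
  · refine ⟨by intro x hx; simp at hx; simp [hx], by simp, ?_⟩
    rintro a b h1 _ ⟨ha, hb⟩; simp at h1 ha; omega
  · intro E hE; simp at hE; subst hE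
    refine ⟨⟨by simp, by simp⟩, ?_⟩
    intro T hT hsub
    apply Set.Subset.antisymm hsub
    intro x hx
    have := hT.1 hx; simpa using this
  · intro E' hE'; simp at hE'; subst hE'
    refine ⟨⟨by intro x hx; rw [Set.mem_singleton_iff] at hx; simp [hx], ?_⟩, ?_⟩
    · intro a ha b hb h
      rw [Set.mem_singleton_iff] at ha hb h
      subst ha; subst hb
      exact absurd (congrArg Prod.snd h) (by simp)
    · intro T hT hsub
      apply Set.Subset.antisymm hsub
      intro x hx
      have hx' := hT.1 hx
      simp at hx'
      rcases hx' with h | h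
      · exfalso
        exact hT.2 1 (hsub (by simp)) x hx (by simp [h])
      · simp [h]
  · intro E hE; simp at hE; subst hE
    exact ⟨{1}, by simp, Or.inl (by intro h; have := h (Set.mem_singleton 1); simp at this)⟩
  · refine ⟨{0}, by simp, ?_⟩
    intro E' hE'; simp at hE'; subst hE'
    intro h; have := h (Set.mem_singleton 0); simp at this
end

section
/- There exist argumentation frameworks AF = (AR, Attacks) and AF' = (AR', Attacks') with AF ≼_N AF' such that, for stage semantics, the weak reference independence condition holds but the weak rational monotony condition fails; i.e., setting U = ⋃_{E' stage extension of AF'} (E' \ AR), for every stage extension E of AF there exists a stage extension E' of AF' with E' ⊄ AR or E' = E; yet there exists a stage extension E of AF such that no (a, b) ∈ Attacks' has a ∈ U and b ∈ E, and no stage extension E' of AF' satisfies E ⊆ E'. A witness is AF = ({c, d, e}, {(c, d), (d, e), (e, c)}) and AF' = ({c, d, e, f}, {(c, d), (d, e), (e, c), (f, d)}), whose stage extensions are {{c}, {d}, {e}} and {{e, f}} respectively, with E = {c}. -/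
namespace StageCounterexample
open ArgFramework

def Fx : ArgFramework ℕ where
  args := {0, 1, 2}
  att := {(0, 1), (1, 2), (2, 0)}
  args_finite := (Set.finite_singleton 2).insert 1 |>.insert 0
  att_sub := by
    rintro ⟨a, b⟩ h
    simp only [Set.mem_insert_iff, Set.mem_singleton_iff, Prod.mk.injEq] at h
    rcases h with ⟨rfl, rfl⟩ | ⟨rfl, rfl⟩ | ⟨rfl, rfl⟩ <;> simp

def Fy : ArgFramework ℕ where
  args := {0, 1, 2, 3}
  att := {(0, 1), (1, 2), (2, 0), (3, 1)}
  args_finite := ((Set.finite_singleton 3).insert 2 |>.insert 1 |>.insert 0)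
  att_sub := by
    rintro ⟨a, b⟩ h
    simp only [Set.mem_insert_iff, Set.mem_singleton_iff, Prod.mk.injEq] at h
    rcases h with ⟨rfl, rfl⟩ | ⟨rfl, rfl⟩ | ⟨rfl, rfl⟩ | ⟨rfl, rfl⟩ <;> simp

lemma range_sub (G : ArgFramework ℕ) (S : Set ℕ) (h : S ⊆ G.args) :
    G.range S ⊆ G.args := by
  rintro x (hx | ⟨a, ha, hat⟩)
  · exact h hx
  · exact (G.att_sub hat).2

lemma mem_attF {a b : ℕ} :
    (a, b) ∈ Fx.att ↔ (a = 0 ∧ b = 1) ∨ (a = 1 ∧ b = 2) ∨ (a = 2 ∧ b = 0) := by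
  simp [Fx, Prod.ext_iff]

lemma mem_attF' {a b : ℕ} :
    (a, b) ∈ Fy.att ↔ (a = 0 ∧ b = 1) ∨ (a = 1 ∧ b = 2) ∨ (a = 2 ∧ b = 0) ∨ (a = 3 ∧ b = 1) := by
  simp [Fy, Prod.ext_iff]

lemma cf23 : Fy.ConflictFree {2, 3} := by
  constructor
  · intro x hx; rcases hx with rfl | rfl <;> simp [Fy]
  · intro a ha b hb hab
    rw [mem_attF'] at hab
    rcases ha with rfl | ha <;> rcases hb with rfl | hb <;> simp_all

lemma range23 : Fy.range {2, 3} = Fy.args := by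
  apply Set.Subset.antisymm (range_sub _ _ cf23.1)
  intro x hx
  rcases hx with rfl | rfl | rfl | hx
  · exact Or.inr ⟨2, by simp, by rw [mem_attF']; tauto⟩
  · exact Or.inr ⟨3, by simp, by rw [mem_attF']; tauto⟩
  · exact Or.inl (by simp)
  · rcases hx with rfl; exact Or.inl (by simp)

lemma stage23 : Fy.StageExt {2, 3} := by
  refine ⟨cf23, ?_⟩
  rintro ⟨T, hT, hss⟩
  exact hss.2 (by rw [range23]; exact range_sub _ _ hT.1)

lemma stage0 : Fx.StageExt {0} := by
  constructor
  · constructor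
    · intro x hx; rcases hx with rfl; simp [Fx]
    · intro a ha b hb hab
      rcases ha with rfl; rcases hb with rfl
      rw [mem_attF] at hab; simp_all
  · rintro ⟨T, hT, hss⟩
    -- range {0} = {0, 1}
    have h0 : (0 : ℕ) ∈ Fx.range {0} := Or.inl rfl
    have h1 : (1 : ℕ) ∈ Fx.range {0} := Or.inr ⟨0, rfl, by rw [mem_attF]; tauto⟩
    obtain ⟨x, hxT, hxn⟩ := Set.exists_of_ssubset hss
    have hxargs : x ∈ Fx.args := range_sub _ _ hT.1 hxT
    have hx2 : x = 2 := by
      rcases hxargs with rfl | rfl | rfl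
      · exact absurd h0 hxn
      · exact absurd h1 hxn
      · rfl
    subst hx2
    have h0T : (0 : ℕ) ∈ Fx.range T := hss.1 h0
    have h1T : (1 : ℕ) ∈ Fx.range T := hss.1 h1
    -- decode memberships
    have m2 : (2 : ℕ) ∈ T ∨ (1 : ℕ) ∈ T := by
      rcases hxT with h | ⟨a, ha, hat⟩
      · exact Or.inl h
      · rw [mem_attF] at hat
        rcases hat with ⟨_, h⟩ | ⟨rfl, _⟩ | ⟨_, h⟩ <;> first | omega | exact Or.inr ha
    have m0 : (0 : ℕ) ∈ T ∨ (2 : ℕ) ∈ T := by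
      rcases h0T with h | ⟨a, ha, hat⟩
      · exact Or.inl h
      · rw [mem_attF] at hat
        rcases hat with ⟨_, h⟩ | ⟨_, h⟩ | ⟨rfl, _⟩ <;> first | omega | exact Or.inr ha
    have m1 : (1 : ℕ) ∈ T ∨ (0 : ℕ) ∈ T := by
      rcases h1T with h | ⟨a, ha, hat⟩
      · exact Or.inl h
      · rw [mem_attF] at hat
        rcases hat with ⟨rfl, _⟩ | ⟨_, h⟩ | ⟨_, h⟩ <;> first | omega | exact Or.inr ha
    have hcf := hT.2
    rcases m2 with h2 | h1'
    · rcases m1 with h1' | h0'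
      · exact hcf 1 h1' 2 h2 (by rw [mem_attF]; tauto)
      · exact hcf 2 h2 0 h0' (by rw [mem_attF]; tauto)
    · rcases m0 with h0' | h2
      · exact hcf 0 h0' 1 h1' (by rw [mem_attF]; tauto)
      · exact hcf 1 h1' 2 h2 (by rw [mem_attF]; tauto)

lemma no_stage_zero (E : Set ℕ) (hE : Fy.StageExt E) : (0 : ℕ) ∉ E := by
  intro h0
  have hcf := hE.1
  have h2r : (2 : ℕ) ∉ Fy.range E := by
    rintro (h2 | ⟨a, ha, hat⟩)
    · exact hcf.2 2 h2 0 h0 (by rw [mem_attF']; tauto)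
    · rw [mem_attF'] at hat
      rcases hat with ⟨_, h⟩ | ⟨rfl, _⟩ | ⟨_, h⟩ | ⟨_, h⟩ <;>
        first
        | omega
        | exact hcf.2 0 h0 1 ha (by rw [mem_attF']; tauto)
  exact hE.2 ⟨{2, 3}, cf23, by
    constructor
    · rw [range23]; exact range_sub _ _ hcf.1
    · intro hsub
      exact h2r (hsub (by rw [range23]; simp [Fy]))⟩

end StageCounterexample

/-- For stage semantics, weak reference independence does not
imply weak rational monotony: there are a framework and a normal expansion of
it for which the weak reference independence condition holds, yet some stage
extension of the original framework witnesses failure of the weak rational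
monotony condition. -/
theorem weak_reference_independence_not_implies_weak_rational_monotony :
    ∃ F F' : ArgFramework ℕ,
      F.NormalExpansion F' ∧
      (∀ E, F.StageExt E →
        ∃ E', F'.StageExt E' ∧ (¬ E' ⊆ F.args ∨ E' = E)) ∧
      (∃ E, F.StageExt E ∧
        (¬ ∃ a b, (a, b) ∈ F'.att ∧
          a ∈ (⋃ T ∈ {T | F'.StageExt T}, T \ F.args) ∧ b ∈ E) ∧
        ¬ ∃ E', F'.StageExt E' ∧ E ⊆ E') := by
  refine ⟨StageCounterexample.Fx, StageCounterexample.Fy, ?_, ?_, ?_⟩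
  · refine ⟨?_, ?_, ?_⟩
    · intro x hx
      rcases hx with rfl | rfl | rfl <;> simp [StageCounterexample.Fy]
    · intro p hp
      rcases p with ⟨a, b⟩
      rw [StageCounterexample.mem_attF] at hp
      rw [StageCounterexample.mem_attF']; tauto
    · intro a b hab hnab ⟨ha, hb⟩
      rw [StageCounterexample.mem_attF'] at hab
      rw [StageCounterexample.mem_attF] at hnab
      rcases hab with h | h | h | ⟨rfl, rfl⟩
      · exact hnab (Or.inl h)
      · exact hnab (Or.inr (Or.inl h))
      · exact hnab (Or.inr (Or.inr h))
      · rcases ha with h | h | h <;> simp_all [StageCounterexample.Fx]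
  · intro E _
    refine ⟨{2, 3}, StageCounterexample.stage23, Or.inl ?_⟩
    intro hsub
    have := hsub (Or.inr rfl)
    simp [StageCounterexample.Fx] at this
  · refine ⟨{0}, StageCounterexample.stage0, ?_, ?_⟩
    · rintro ⟨a, b, hab, ha, hb⟩
      rcases hb with rfl
      rw [StageCounterexample.mem_attF'] at hab
      have ha2 : a = 2 := by omega
      subst ha2
      simp only [Set.mem_iUnion] at ha
      obtain ⟨T, hT, h2, hn⟩ := ha
      exact hn (by simp [StageCounterexample.Fx])
    · rintro ⟨E', hE', hsub⟩
      exact StageCounterexample.no_stage_zero E' hE' (hsub rfl)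
end

section
/- There exist argumentation frameworks AF = (AR, Attacks) and AF' = (AR', Attacks') with AF ≼_N AF' such that, for stage semantics, the strong cautious monotony condition holds but the strong reference independence condition fails; i.e., for every stage extension E of AF, if there is no (a, b) ∈ Attacks' with a ∈ AR' \ AR and b ∈ E, then every stage extension E' of AF' satisfies E ⊆ E'; yet there exist a stage extension E of AF and a stage extension E' of AF' with E' ⊆ AR and E' ≠ E. A witness is AF = ({c, d}, {(c, d)}) and AF' = ({c, d, e}, {(c, d), (d, e), (e, e), (e, c)}), whose stage extensions are {{c}} and {{c}, {d}} respectively. -/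
open ArgFramework in
noncomputable def Fsmall : ArgFramework ℕ where
  args := {0, 1}
  att := {(0, 1)}
  args_finite := (Set.finite_singleton 1).insert 0
  att_sub := by
    intro p hp
    simp only [Set.mem_singleton_iff] at hp
    subst hp
    constructor <;> simp

open ArgFramework in
noncomputable def Fbig : ArgFramework ℕ where
  args := {0, 1, 2}
  att := {(0, 1), (1, 2), (2, 2), (2, 0)}
  args_finite := by
    exact ((Set.finite_singleton 2).insert 1).insert 0
  att_sub := by
    intro p hp
    simp only [Set.mem_insert_iff, Set.mem_singleton_iff] at hp
    rcases hp with rfl | rfl | rfl | rfl <;> constructor <;> simp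

lemma Fsmall_att_iff (a b : ℕ) : (a, b) ∈ Fsmall.att ↔ a = 0 ∧ b = 1 := by
  simp [Fsmall, Prod.ext_iff]

lemma Fbig_att_iff (a b : ℕ) :
    (a, b) ∈ Fbig.att ↔ (a = 0 ∧ b = 1) ∨ (a = 1 ∧ b = 2) ∨ (a = 2 ∧ b = 2) ∨ (a = 2 ∧ b = 0) := by
  simp [Fbig, Prod.ext_iff]

lemma Fsmall_stage_zero_mem {E : Set ℕ} (hE : Fsmall.StageExt E) : 0 ∈ E := by
  by_contra h0
  apply hE.2
  refine ⟨{0}, ⟨by simp [Fsmall], ?_⟩, ?_⟩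
  · intro a ha b hb
    simp only [Set.mem_singleton_iff] at ha hb
    subst ha; subst hb
    intro h; rw [Fsmall_att_iff] at h; omega
  · constructor
    · -- range E ⊆ range {0}
      rintro x (hx | ⟨a, ha, hatt⟩)
      · have := hE.1.1 hx
        simp only [Fsmall, Set.mem_insert_iff, Set.mem_singleton_iff] at this
        rcases this with rfl | rfl
        · exact Or.inl rfl
        · exact Or.inr ⟨0, rfl, (Fsmall_att_iff 0 1).mpr ⟨rfl, rfl⟩⟩
      · rw [Fsmall_att_iff] at hatt
        exact absurd ha (hatt.1 ▸ h0)
    · -- ¬ range {0} ⊆ range E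
      intro hsub
      have h0r : (0 : ℕ) ∈ Fsmall.range E := hsub (Or.inl rfl)
      rcases h0r with h | ⟨a, _, hatt⟩
      · exact h0 h
      · rw [Fsmall_att_iff] at hatt; exact absurd hatt.2 (by norm_num)

lemma Fbig_stage_one : Fbig.StageExt {1} := by
  constructor
  · refine ⟨by simp [Fbig], ?_⟩
    intro a ha b hb
    simp only [Set.mem_singleton_iff] at ha hb
    subst ha; subst hb
    intro h; rw [Fbig_att_iff] at h; omega
  · rintro ⟨T, hT, hss⟩
    have hTsub : T ⊆ Fbig.args := hT.1
    -- 2 ∉ T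
    have h2T : 2 ∉ T := fun h => hT.2 2 h 2 h (by simp [Fbig_att_iff])
    -- 2 ∈ range T
    have h2 : (2 : ℕ) ∈ Fbig.range T := hss.1 (Or.inr ⟨1, rfl, by simp [Fbig_att_iff]⟩)
    have h1T : 1 ∈ T := by
      rcases h2 with h | ⟨a, ha, hatt⟩
      · exact absurd h h2T
      · rw [Fbig_att_iff] at hatt
        rcases hatt with ⟨_, h⟩ | ⟨rfl, _⟩ | ⟨rfl, _⟩ | ⟨_, h⟩ <;> first
          | omega | exact ha | exact absurd ha h2T
    -- get element of range T not in range {1}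
    obtain ⟨x, hx, hxn⟩ := Set.not_subset.mp hss.2
    have hx0 : x = 0 := by
      have hxargs : x ∈ Fbig.args := by
        rcases hx with h | ⟨a, _, hatt⟩
        · exact hTsub h
        · exact (Fbig.att_sub hatt).2
      simp only [Fbig, Set.mem_insert_iff, Set.mem_singleton_iff] at hxargs
      rcases hxargs with rfl | rfl | rfl
      · rfl
      · exact absurd (Or.inl rfl) hxn
      · exact absurd (Or.inr ⟨1, rfl, by simp [Fbig_att_iff]⟩) hxn
    subst hx0
    have h0T : 0 ∈ T := by
      rcases hx with h | ⟨a, ha, hatt⟩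
      · exact h
      · rw [Fbig_att_iff] at hatt
        rcases hatt with ⟨_, h⟩ | ⟨_, h⟩ | ⟨_, h⟩ | ⟨rfl, _⟩ <;>
          first | omega | exact absurd ha h2T
    exact hT.2 0 h0T 1 h1T (by simp [Fbig_att_iff])

lemma Fsmall_stage_zero : Fsmall.StageExt {0} := by
  constructor
  · refine ⟨by simp [Fsmall], ?_⟩
    intro a ha b hb
    simp only [Set.mem_singleton_iff] at ha hb
    subst ha; subst hb
    intro h; rw [Fsmall_att_iff] at h; omega
  · rintro ⟨T, hT, hss⟩
    apply hss.2
    rintro x (hx | ⟨a, ha, hatt⟩)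
    · have := hT.1 hx
      simp only [Fsmall, Set.mem_insert_iff, Set.mem_singleton_iff] at this
      rcases this with rfl | rfl
      · exact Or.inl rfl
      · exact Or.inr ⟨0, rfl, by simp [Fsmall_att_iff]⟩
    · rw [Fsmall_att_iff] at hatt
      exact Or.inr ⟨0, rfl, by simp [Fsmall_att_iff, hatt.2]⟩

/-- For stage semantics, strong cautious monotony does not imply
strong reference independence: there are a framework and a normal expansion
of it for which the strong cautious monotony condition holds but the strong
reference independence condition fails. -/
theorem strong_cautious_monotony_not_implies_strong_reference_independence :
    ∃ F F' : ArgFramework ℕ,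
      F.NormalExpansion F' ∧
      (∀ E, F.StageExt E →
        (¬ ∃ a b, (a, b) ∈ F'.att ∧ a ∈ F'.args \ F.args ∧ b ∈ E) →
        ∀ E', F'.StageExt E' → E ⊆ E') ∧
      (∃ E E', F.StageExt E ∧ F'.StageExt E' ∧ E' ⊆ F.args ∧ E' ≠ E) := by
  refine ⟨Fsmall, Fbig, ?_, ?_, ?_⟩
  · refine ⟨?_, ?_, ?_⟩
    · intro x hx
      simp only [Fsmall, Set.mem_insert_iff, Set.mem_singleton_iff] at hx
      rcases hx with rfl | rfl <;> simp [Fbig]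
    · intro p hp
      simp only [Fsmall, Set.mem_singleton_iff] at hp
      subst hp; simp [Fbig]
    · intro a b hab hnab
      rw [Fbig_att_iff] at hab
      rintro ⟨ha, hb⟩
      simp only [Fsmall, Set.mem_insert_iff, Set.mem_singleton_iff] at ha hb
      rcases hab with ⟨rfl, rfl⟩ | ⟨rfl, rfl⟩ | ⟨rfl, rfl⟩ | ⟨rfl, rfl⟩
      · exact hnab (by simp [Fsmall])
      · rcases hb with h | h <;> omega
      · rcases ha with h | h <;> omega
      · rcases ha with h | h <;> omega
  · intro E hE hno E' _
    exact absurd ⟨2, 0, by simp [Fbig_att_iff], ⟨by simp [Fbig], by simp [Fsmall]⟩,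
      Fsmall_stage_zero_mem hE⟩ hno
  · exact ⟨{0}, {1}, Fsmall_stage_zero, Fbig_stage_one, by simp [Fsmall],
      by intro h; have : (1:ℕ) ∈ ({0} : Set ℕ) := h ▸ rfl; simp at this⟩
end

section
/- Naive semantics satisfies weak reference independence: for every two argumentation frameworks AF = (AR, Attacks) and AF' = (AR', Attacks') with AF ≼_N AF', and for every naive extension E of AF, there exists a naive extension E' of AF' such that E' ⊄ AR or E' = E. -/
/-- Naive semantics satisfies weak reference independence: for
every framework, every normal expansion of it, and every naive extension `E`
of the original framework, there is a naive extension `E'` of the expansion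
with `E' ⊄ AR` or `E' = E`. -/
theorem naive_weak_reference_independence
    {α : Type*} (F F' : ArgFramework α)
    (hN : F.NormalExpansion F') :
    ∀ E, F.NaiveExt E → ∃ E', F'.NaiveExt E' ∧ (¬ E' ⊆ F.args ∨ E' = E) := by
  intro E hE
  obtain ⟨⟨hEsub, hEcf⟩, hEmax⟩ := hE
  obtain ⟨hargs, hatt, hnew⟩ := hN
  -- E is conflict-free in F'
  have hEcf' : F'.ConflictFree E := by
    refine ⟨hEsub.trans hargs, fun a ha b hb hab => ?_⟩
    by_cases h : (a, b) ∈ F.att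
    · exact hEcf a ha b hb h
    · exact hnew a b hab h ⟨hEsub ha, hEsub hb⟩
  -- the family of conflict-free supersets of E in F' is finite and nonempty
  set s : Set (Set α) := {T | F'.ConflictFree T ∧ E ⊆ T} with hs
  have hsfin : s.Finite := by
    apply F'.args_finite.finite_subsets.subset
    intro T hT
    exact hT.1.1
  obtain ⟨E', hE's, hE'max⟩ : ∃ E' ∈ s, ∀ T ∈ s, E' ⊆ T → E' = T :=
    (hsfin.exists_maximalFor id s (⟨E, hEcf', subset_rfl⟩)).imp fun E' (h : MaximalFor (· ∈ s) id E') =>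
      ⟨h.1, fun T hT hle => le_antisymm hle (h.2 hT hle)⟩
  refine ⟨E', ⟨hE's.1, fun T hT hsub => ?_⟩, ?_⟩
  · exact hE'max T ⟨hT, hE's.2.trans hsub⟩ hsub
  · by_cases hsub : E' ⊆ F.args
    · right
      have hcfF : F.ConflictFree E' :=
        ⟨hsub, fun a ha b hb hab => hE's.1.2 a ha b hb (hatt hab)⟩
      exact (hEmax E' hcfF hE's.2).symm
    · exact Or.inl hsub
end

section
/- Grounded semantics violates weak reference independence: there exist argumentation frameworks AF = (AR, Attacks) and AF' = (AR', Attacks') with AF ≼_N AF' and a grounded extension E of AF such that every grounded extension E' of AF' satisfies E' ⊆ AR and E' ≠ E. A witness is AF = ({a, b}, {(a, b)}) and AF' = ({a, b, c}, {(a, b), (b, c), (c, a)}), whose grounded extensions are {a} and ∅ respectively. -/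
/-- Grounded semantics violates weak reference independence:
there are a framework, a normal expansion of it, and a grounded extension `E`
of the original framework such that every grounded extension `E'` of the
expansion satisfies `E' ⊆ AR` and `E' ≠ E`. -/
theorem grounded_violates_weak_reference_independence :
    ∃ F F' : ArgFramework ℕ,
      F.NormalExpansion F' ∧
      ∃ E, F.GroundedExt E ∧
        ∀ E', F'.GroundedExt E' → E' ⊆ F.args ∧ E' ≠ E := by
  refine ⟨⟨{0, 1}, {(0, 1)}, (Set.finite_singleton 1).insert 0, ?_⟩,
    ⟨{0, 1, 2}, {(0, 1), (1, 2), (2, 0)},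
      ((Set.finite_singleton 2).insert 1).insert 0, ?_⟩, ?_, {0}, ?_, ?_⟩
  · rintro ⟨a, b⟩ h
    simp only [Set.mem_singleton_iff, Prod.mk.injEq] at h
    simp [h.1, h.2]
  · rintro ⟨a, b⟩ h
    simp only [Set.mem_insert_iff, Set.mem_singleton_iff, Prod.mk.injEq] at h
    rcases h with ⟨rfl, rfl⟩ | ⟨rfl, rfl⟩ | ⟨rfl, rfl⟩ <;> simp
  · refine ⟨by intro x hx; simp at hx ⊢; tauto, by intro x hx; simp at hx ⊢; tauto, ?_⟩
    rintro a b h h' ⟨ha, hb⟩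
    simp only [Set.mem_insert_iff, Set.mem_singleton_iff, Prod.mk.injEq] at h h' ha hb
    rcases h with ⟨rfl, rfl⟩ | ⟨rfl, rfl⟩ | ⟨rfl, rfl⟩ <;> simp_all
  · -- {0} is the grounded extension of F
    refine ⟨⟨⟨⟨by simp, ?_⟩, ?_⟩, ?_⟩, ?_⟩
    · rintro a ha b hb h
      simp only [Set.mem_singleton_iff] at ha hb
      subst ha; subst hb
      simp only [Set.mem_singleton_iff, Prod.mk.injEq] at h
      exact absurd h.2 (by norm_num)
    · rintro a ha b h
      simp only [Set.mem_singleton_iff] at ha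
      subst ha
      simp only [Set.mem_singleton_iff, Prod.mk.injEq] at h
      exact absurd h.2 (by norm_num)
    · rintro a ha hacc
      simp only [Set.mem_insert_iff, Set.mem_singleton_iff] at ha
      rcases ha with rfl | rfl
      · simp
      · exfalso
        obtain ⟨c, hc, hatt⟩ := hacc 0 (by simp)
        simp only [Set.mem_singleton_iff] at hc
        subst hc
        simp only [Set.mem_singleton_iff, Prod.mk.injEq] at hatt
        exact absurd hatt.2 (by norm_num)
    · rintro T ⟨hTadm, hTcomp⟩ x hx
      simp only [Set.mem_singleton_iff] at hx
      subst hx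
      refine hTcomp 0 (by simp) ?_
      rintro b hb
      simp only [Set.mem_singleton_iff, Prod.mk.injEq] at hb
      exact absurd hb.2 (by norm_num)
  · -- every grounded extension of F' is ⊆ {0,1} and ≠ {0}
    rintro E' ⟨hE'c, hE'min⟩
    -- ∅ is complete in F'
    have hempty : (⟨{0, 1, 2}, {(0, 1), (1, 2), (2, 0)},
        ((Set.finite_singleton 2).insert 1).insert 0, by
          rintro ⟨a, b⟩ h
          simp only [Set.mem_insert_iff, Set.mem_singleton_iff, Prod.mk.injEq] at h
          rcases h with ⟨rfl, rfl⟩ | ⟨rfl, rfl⟩ | ⟨rfl, rfl⟩ <;> simp⟩ :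
        ArgFramework ℕ).CompleteExt ∅ := by
      refine ⟨⟨⟨by simp, by simp⟩, by simp⟩, ?_⟩
      rintro a ha hacc
      exfalso
      simp only [Set.mem_insert_iff, Set.mem_singleton_iff] at ha
      rcases ha with rfl | rfl | rfl
      · obtain ⟨c, hc, -⟩ := hacc 2 (by simp)
        exact hc
      · obtain ⟨c, hc, -⟩ := hacc 0 (by simp)
        exact hc
      · obtain ⟨c, hc, -⟩ := hacc 1 (by simp)
        exact hc
    have hsub : E' ⊆ (∅ : Set ℕ) := hE'min ∅ hempty
    have hE'empty : E' = ∅ := Set.subset_empty_iff.mp hsub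
    subst hE'empty
    refine ⟨by simp, ?_⟩
    intro h
    have : (0 : ℕ) ∈ (∅ : Set ℕ) := h ▸ Set.mem_singleton 0
    exact this
end

section
/- Preferred semantics violates weak reference independence: there exist argumentation frameworks AF = (AR, Attacks) and AF' = (AR', Attacks') with AF ≼_N AF' and a preferred extension E of AF such that every preferred extension E' of AF' satisfies E' ⊆ AR and E' ≠ E. A witness is AF = ({a, b}, {(a, b)}) and AF' = ({a, b, c}, {(a, b), (b, c), (c, a)}), whose preferred extensions are {{a}} and {∅} respectively. -/
/-- Preferred semantics violates weak reference independence: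
there are a framework, a normal expansion of it, and a preferred extension
`E` of the original framework such that every preferred extension `E'` of the
expansion satisfies `E' ⊆ AR` and `E' ≠ E`. -/
theorem preferred_violates_weak_reference_independence :
    ∃ F F' : ArgFramework ℕ,
      F.NormalExpansion F' ∧
      ∃ E, F.PreferredExt E ∧
        ∀ E', F'.PreferredExt E' → E' ⊆ F.args ∧ E' ≠ E := by
  refine ⟨⟨{0, 1}, {(0, 1)}, Set.toFinite _, ?_⟩,
    ⟨{0, 1, 2}, {(0, 1), (1, 2), (2, 0)}, Set.toFinite _, ?_⟩, ?_, {0}, ?_, ?_⟩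
  · rintro ⟨a, b⟩ h; simp_all
  · rintro ⟨a, b⟩ h; rcases h with h | h | h <;> simp_all
  · refine ⟨?_, ?_, ?_⟩
    · intro x hx; rcases hx with h | h <;> simp_all
    · intro p hp; simp_all
    · rintro a b hab hnab ⟨ha, hb⟩
      rcases hab with h | h | h <;> simp_all
  · constructor
    · refine ⟨⟨?_, ?_⟩, ?_⟩
      · intro x hx; simp_all
      · intro a ha b hb
        rcases ha with ha | ha <;> rcases hb with hb | hb <;> simp_all [Prod.ext_iff]
      · intro a ha b hba
        exfalso
        simp only [Set.mem_singleton_iff] at ha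
        subst ha
        simp_all
    · intro T hT hsub
      apply Set.Subset.antisymm hsub
      intro x hx
      have hT1 := hT.1.1 hx
      rcases hT1 with h | h
      · simp_all
      · exfalso
        simp only [Set.mem_singleton_iff] at h
        have h0 : (0 : ℕ) ∈ T := hsub rfl
        exact hT.1.2 0 h0 x hx (by simp [h])
  · intro E' hE'
    -- every admissible set of F' is empty
    have hempty : E' = ∅ := by
      by_contra hne
      obtain ⟨x, hx⟩ := Set.nonempty_iff_ne_empty.mpr hne
      have hadm := hE'.1
      have hxarg := hadm.1.1 hx
      have hcf := hadm.1.2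
      have hdef := hadm.2
      -- case on x
      rcases hxarg with h | h | h
      · -- x = 0, attacker is 2, so some c ∈ E' with (c,2) ∈ att, c = 1
        subst h
        obtain ⟨c, hc, hcat⟩ := hdef 0 hx 2 (by simp)
        have : c = 1 := by
          rcases hcat with h | h | h <;> simp_all
        subst this
        -- then 0 ∈ E', 1 ∈ E', (0,1) ∈ att
        exact hcf 0 hx 1 hc (by simp)
      · subst h
        obtain ⟨c, hc, hcat⟩ := hdef 1 hx 0 (by simp)
        have : c = 2 := by
          rcases hcat with h | h | h <;> simp_all
        subst this
        exact hcf 1 hx 2 hc (by simp)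
      · subst h
        obtain ⟨c, hc, hcat⟩ := hdef 2 hx 1 (by simp)
        have : c = 0 := by
          rcases hcat with h | h | h <;> simp_all
        subst this
        exact hcf 2 hx 0 hc (by simp)
    subst hempty
    exact ⟨by simp, fun h => Set.singleton_ne_empty 0 h.symm⟩
end

section
/- Stable semantics violates weak reference independence: there exist argumentation frameworks AF = (AR, Attacks) and AF' = (AR', Attacks') with AF ≼_N AF' and a stable extension E of AF such that there is no stable extension E' of AF' with E' ⊄ AR or E' = E. A witness is AF = ({a, b}, {(a, b)}) and AF' = ({a, b, c}, {(a, b), (b, c), (c, a)}): {a} is the unique stable extension of AF, and AF' has no stable extension at all. -/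
/-- Stable semantics violates weak reference independence:
there are a framework, a normal expansion of it, and a stable extension `E`
of the original framework such that no stable extension `E'` of the expansion
satisfies `E' ⊄ AR` or `E' = E`. -/
theorem stable_violates_weak_reference_independence :
    ∃ F F' : ArgFramework ℕ,
      F.NormalExpansion F' ∧
      ∃ E, F.StableExt E ∧
        ¬ ∃ E', F'.StableExt E' ∧ (¬ E' ⊆ F.args ∨ E' = E) := by
  refine ⟨⟨{0, 1}, {(0, 1)}, Set.toFinite _, by intro p hp; simp at hp; simp [hp]⟩,
    ⟨{0, 1, 2}, {(0, 1), (1, 2), (2, 0)}, (Set.toFinite _), by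
      intro p hp; simp at hp; rcases hp with h | h | h <;> simp [h]⟩, ?_, {0}, ?_, ?_⟩
  · refine ⟨by intro x hx; simp at hx ⊢; tauto, by intro p hp; simp at hp ⊢; tauto, ?_⟩
    intro a b hab hab'
    simp only [Set.mem_insert_iff, Set.mem_singleton_iff, Prod.mk.injEq] at hab hab' ⊢
    rintro ⟨ha, hb⟩
    rcases hab with h | h | h
    · exact hab' h
    · rcases hb with hb | hb <;> omega
    · rcases ha with ha | ha <;> omega
  · constructor
    · constructor
      · intro x hx; simp at hx; simp [hx]
      · intro a ha b hb; simp at ha hb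
        subst ha; subst hb; intro h; simp [Prod.ext_iff] at h
    · intro b hb
      simp only [Set.mem_diff, Set.mem_insert_iff, Set.mem_singleton_iff] at hb
      refine ⟨0, by simp, ?_⟩
      have : b = 1 := by omega
      simp [this]
  · rintro ⟨E', ⟨⟨hsub, hcf⟩, hatt⟩, -⟩
    -- E' is a stable extension of the 3-cycle: impossible.
    have key : ∀ x y z : ℕ, ((x, y) ∈ ({(0, 1), (1, 2), (2, 0)} : Set (ℕ × ℕ))) →
        ((y, z) ∈ ({(0, 1), (1, 2), (2, 0)} : Set (ℕ × ℕ))) →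
        ((z, x) ∈ ({(0, 1), (1, 2), (2, 0)} : Set (ℕ × ℕ))) →
        x ∈ E' → False := by
      intro x y z hxy hyz hzx hx
      have hyE : y ∉ E' := fun hy => hcf x hx y hy hxy
      have hzE : z ∉ E' := fun hz => hcf z hz x hx hzx
      -- y must be attacked by some member of E'
      have hyargs : y ∈ ({0, 1, 2} : Set ℕ) := by
        have := hxy; simp only [Set.mem_insert_iff, Set.mem_singleton_iff,
          Prod.mk.injEq] at this ⊢
        rcases this with h | h | h <;> simp [h.2]
      obtain ⟨a, haE, hay⟩ := hatt y ⟨hyargs, hyE⟩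
      have hax : a = x := by
        simp only [Set.mem_insert_iff, Set.mem_singleton_iff, Prod.mk.injEq] at hxy hyz hzx hay
        omega
      -- then z must be attacked, only attacker of z is y
      obtain ⟨c, hcE, hcz⟩ := hatt z ⟨by
        simp only [Set.mem_insert_iff, Set.mem_singleton_iff, Prod.mk.injEq] at hyz ⊢
        rcases hyz with h | h | h <;> simp [h.2], hzE⟩
      have : c = y := by
        simp only [Set.mem_insert_iff, Set.mem_singleton_iff, Prod.mk.injEq] at hxy hyz hzx hcz
        omega
      exact hyE (this ▸ hcE)
    -- some element of {0,1,2} is in E'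
    by_cases h0 : 0 ∈ E'
    · exact key 0 1 2 (by simp) (by simp) (by simp) h0
    by_cases h1 : 1 ∈ E'
    · exact key 1 2 0 (by simp) (by simp) (by simp) h1
    obtain ⟨a, haE, ha0⟩ := hatt 0 ⟨by simp, h0⟩
    have : a = 2 := by
      simp only [Set.mem_insert_iff, Set.mem_singleton_iff, Prod.mk.injEq] at ha0
      omega
    exact key 2 0 1 (by simp) (by simp) (by simp) (this ▸ haE)
end

section
/- Skeptical stage semantics violates weak reference independence: there exist argumentation frameworks AF = (AR, Attacks) and AF' = (AR', Attacks') with AF ≼_N AF' such that, writing E for the intersection of all stage extensions of AF and E' for the intersection of all stage extensions of AF', it holds that E' ⊆ AR and E' ≠ E. A witness is AF = ({a, b}, {(a, b)}) and AF' = ({a, b, c}, {(a, b), (b, c), (c, a)}): the stage extensions of AF are {{a}} and those of AF' are {{a}, {b}, {c}}, so E = {a} and E' = ∅. -/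
open ArgFramework

def myF : ArgFramework ℕ :=
  ⟨{0,1}, {(0,1)}, Set.toFinite _, by
    rintro ⟨a,b⟩ h
    simp only [Set.mem_singleton_iff, Prod.mk.injEq] at h
    simp [h.1, h.2]⟩

def myF' : ArgFramework ℕ :=
  ⟨{0,1,2}, {(0,1),(1,2),(2,0)}, Set.toFinite _, by
    rintro ⟨a,b⟩ h
    simp only [Set.mem_insert_iff, Set.mem_singleton_iff, Prod.mk.injEq] at h
    rcases h with ⟨h1,h2⟩|⟨h1,h2⟩|⟨h1,h2⟩ <;> simp [h1, h2]⟩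

lemma myF_att : myF.att = {(0,1)} := rfl
lemma myF'_att : myF'.att = {(0,1),(1,2),(2,0)} := rfl

lemma mem_att' {a b : ℕ} : (a,b) ∈ myF'.att ↔ (a = 0 ∧ b = 1) ∨ (a = 1 ∧ b = 2) ∨ (a = 2 ∧ b = 0) := by
  simp [myF'_att, Prod.ext_iff]

lemma mem_att {a b : ℕ} : (a,b) ∈ myF.att ↔ (a = 0 ∧ b = 1) := by
  simp [myF_att, Prod.ext_iff]

lemma stage1' : myF'.StageExt {1} := by
  constructor
  · constructor
    · intro x hx; simp at hx; subst hx; show (1:ℕ) ∈ ({0,1,2}:Set ℕ); simp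
    · intro a ha b hb h
      simp at ha hb; subst ha; subst hb
      rw [mem_att'] at h; omega
  · rintro ⟨T, ⟨hTsub, hTcf⟩, hsub, hnsub⟩
    -- range {1} contains 1 and 2
    have h1 : (1:ℕ) ∈ myF'.range {1} := Or.inl rfl
    have h2 : (2:ℕ) ∈ myF'.range {1} := Or.inr ⟨1, rfl, by rw [mem_att']; tauto⟩
    have h1T := hsub h1
    have h2T := hsub h2
    -- strictness gives an element of range T outside range {1}
    have ⟨x, hxT, hx1⟩ : ∃ x, x ∈ myF'.range T ∧ x ∉ myF'.range {1} := by
      by_contra hc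
      push_neg at hc
      exact hnsub (fun y hy => by_contra fun hny => hny (hc y hy))
    -- range T ⊆ args = {0,1,2}
    have hrT : ∀ y ∈ myF'.range T, y = 0 ∨ y = 1 ∨ y = 2 := by
      intro y hy
      rcases hy with hy | ⟨a, haT, hatt⟩
      · have := hTsub hy; simpa [myF'] using this
      · rw [mem_att'] at hatt; omega
    have hx0 : x = 0 := by
      rcases hrT x hxT with h | h | h
      · exact h
      · exact absurd (h ▸ h1) hx1
      · exact absurd (h ▸ h2) hx1
    subst hx0
    -- unpack memberships in range T
    have g0 : (0:ℕ) ∈ T ∨ (2:ℕ) ∈ T := by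
      rcases hxT with h | ⟨a, haT, hatt⟩
      · exact Or.inl h
      · rw [mem_att'] at hatt
        right; have : a = 2 := by omega
        exact this ▸ haT
    have g1 : (1:ℕ) ∈ T ∨ (0:ℕ) ∈ T := by
      rcases h1T with h | ⟨a, haT, hatt⟩
      · exact Or.inl h
      · rw [mem_att'] at hatt
        right; have : a = 0 := by omega
        exact this ▸ haT
    have g2 : (2:ℕ) ∈ T ∨ (1:ℕ) ∈ T := by
      rcases h2T with h | ⟨a, haT, hatt⟩
      · exact Or.inl h
      · rw [mem_att'] at hatt
        right; have : a = 1 := by omega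
        exact this ▸ haT
    -- conflict-freeness contradictions
    have c01 : ¬((0:ℕ) ∈ T ∧ (1:ℕ) ∈ T) := fun ⟨ha, hb⟩ =>
      hTcf 0 ha 1 hb (by rw [mem_att']; tauto)
    have c12 : ¬((1:ℕ) ∈ T ∧ (2:ℕ) ∈ T) := fun ⟨ha, hb⟩ =>
      hTcf 1 ha 2 hb (by rw [mem_att']; tauto)
    have c20 : ¬((2:ℕ) ∈ T ∧ (0:ℕ) ∈ T) := fun ⟨ha, hb⟩ =>
      hTcf 2 ha 0 hb (by rw [mem_att']; tauto)
    tauto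

lemma stage0F : ∀ S, myF.StageExt S → 0 ∈ S := by
  intro S ⟨⟨hSsub, hScf⟩, hmax⟩
  by_contra h0
  apply hmax
  refine ⟨{0}, ⟨?_, ?_⟩, ?_, ?_⟩
  · intro x hx; simp at hx; subst hx; show (0:ℕ) ∈ ({0,1}:Set ℕ); simp
  · intro a ha b hb h
    simp at ha hb; subst ha; subst hb
    rw [mem_att] at h; omega
  · -- range S ⊆ range {0}
    intro y hy
    rcases hy with hy | ⟨a, haS, hatt⟩
    · have hy01 := hSsub hy
      have : y = 0 ∨ y = 1 := by simpa [myF] using hy01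
      rcases this with h | h
      · exact absurd (h ▸ hy) h0
      · subst h; exact Or.inr ⟨0, rfl, by rw [mem_att]; tauto⟩
    · rw [mem_att] at hatt
      have : a = 0 := hatt.1
      exact absurd (this ▸ haS) h0
  · -- ¬ range {0} ⊆ range S
    intro hc
    have h0r : (0:ℕ) ∈ myF.range {0} := Or.inl rfl
    rcases hc h0r with hy | ⟨a, haS, hatt⟩
    · exact h0 hy
    · rw [mem_att] at hatt; omega



/-- Skeptical stage semantics violates weak reference
independence: there are a framework and a normal expansion of it such that
the intersection of all stage extensions of the expansion is contained in the
original arguments and differs from the intersection of all stage extensions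
of the original framework. -/
theorem skeptical_stage_violates_weak_reference_independence :
    ∃ F F' : ArgFramework ℕ,
      F.NormalExpansion F' ∧
      (⋂₀ {T | F'.StageExt T}) ⊆ F.args ∧
      (⋂₀ {T | F'.StageExt T}) ≠ (⋂₀ {T | F.StageExt T}) := by
  refine ⟨myF, myF', ⟨?_, ?_, ?_⟩, ?_, ?_⟩
  · intro x hx
    have : x = 0 ∨ x = 1 := by simpa [myF] using hx
    rcases this with h | h <;> subst h <;> (show _ ∈ ({0,1,2}:Set ℕ); simp)
  · rintro ⟨a,b⟩ h
    rw [mem_att] at h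
    rw [mem_att']; tauto
  · intro a b hab hnab ⟨ha, hb⟩
    rw [mem_att'] at hab
    rw [mem_att] at hnab
    have ha' : a = 0 ∨ a = 1 := by simpa [myF] using ha
    have hb' : b = 0 ∨ b = 1 := by simpa [myF] using hb
    omega
  · intro x hx
    have := hx _ stage1'
    simp at this; subst this
    show (1:ℕ) ∈ ({0,1}:Set ℕ); simp
  · intro heq
    have h0 : (0:ℕ) ∈ ⋂₀ {T | myF.StageExt T} := by
      intro T hT; exact stage0F T hT
    rw [← heq] at h0
    have := h0 _ stage1'
    simp at this
end

section
/- Rational man's expansions preserve weak reference independence for grounded semantics: for every two argumentation frameworks AF = (AR, Attacks) and AF' = (AR', Attacks') such that AF' is a rational man's expansion of AF (AF ≼_RM AF'), and for every grounded extension E of AF, there exists a grounded extension E' of AF' such that E' ⊄ AR or E' = E. -/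
namespace ArgFramework

variable {α : Type*}

-- auxiliary grounded-extension machinery


def fchar (F : ArgFramework α) (S : Set α) : Set α := {a | a ∈ F.args ∧ F.Acceptable S a}

lemma fchar_mono (F : ArgFramework α) {S T : Set α} (h : S ⊆ T) : F.fchar S ⊆ F.fchar T := by
  rintro a ⟨ha, hacc⟩
  refine ⟨ha, fun b hb => ?_⟩
  obtain ⟨c, hc, hcb⟩ := hacc b hb
  exact ⟨c, h hc, hcb⟩

lemma fchar_cf (F : ArgFramework α) {S : Set α} (h : F.ConflictFree S) :
    F.ConflictFree (F.fchar S) := by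
  refine ⟨fun a ha => ha.1, ?_⟩
  rintro a ⟨_, haacc⟩ b ⟨_, hbacc⟩ hab
  obtain ⟨c, hcS, hca⟩ := hbacc a hab
  obtain ⟨d, hdS, hdc⟩ := haacc c hca
  exact h.2 d hdS c hcS hdc

def gIter (F : ArgFramework α) : ℕ → Set α
  | 0 => ∅
  | n + 1 => F.fchar (F.gIter n)

lemma gIter_succ (F : ArgFramework α) : ∀ n, F.gIter n ⊆ F.gIter (n + 1)
  | 0 => Set.empty_subset _
  | n + 1 => fchar_mono F (gIter_succ F n)

lemma gIter_mono (F : ArgFramework α) {m n : ℕ} (h : m ≤ n) : F.gIter m ⊆ F.gIter n := by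
  induction h with
  | refl => exact subset_rfl
  | step _ ih => exact ih.trans (F.gIter_succ _)

lemma gIter_cf (F : ArgFramework α) : ∀ n, F.ConflictFree (F.gIter n)
  | 0 => ⟨Set.empty_subset _, fun a ha => ha.elim⟩
  | n + 1 => fchar_cf F (gIter_cf F n)

def gnd (F : ArgFramework α) : Set α := ⋃ n, F.gIter n

lemma gIter_subset_gnd (F : ArgFramework α) (n : ℕ) : F.gIter n ⊆ F.gnd :=
  Set.subset_iUnion F.gIter n

lemma gnd_subset_args (F : ArgFramework α) : F.gnd ⊆ F.args := by
  refine Set.iUnion_subset fun n => ?_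
  cases n with
  | zero => exact Set.empty_subset _
  | succ n => exact fun a ha => ha.1

lemma gnd_cf (F : ArgFramework α) : F.ConflictFree F.gnd := by
  refine ⟨F.gnd_subset_args, fun a ha b hb hab => ?_⟩
  rw [gnd, Set.mem_iUnion] at ha hb
  obtain ⟨m, ha⟩ := ha
  obtain ⟨n, hb⟩ := hb
  exact (F.gIter_cf (max m n)).2 a (F.gIter_mono (le_max_left m n) ha) b
    (F.gIter_mono (le_max_right m n) hb) hab

lemma acceptable_gnd (F : ArgFramework α) {a : α} (h : F.Acceptable F.gnd a) :
    ∃ N, F.Acceptable (F.gIter N) a := by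
  classical
  have hch : ∀ b : α, (b, a) ∈ F.att → ∃ n, ∃ c ∈ F.gIter n, (c, b) ∈ F.att := by
    intro b hb
    obtain ⟨c, hc, hcb⟩ := h b hb
    rw [gnd, Set.mem_iUnion] at hc
    obtain ⟨n, hc⟩ := hc
    exact ⟨n, c, hc, hcb⟩
  choose! nf hnf using hch
  have hBfin : Set.Finite {b | (b, a) ∈ F.att} :=
    F.args_finite.subset (fun b hb => (F.att_sub hb).1)
  obtain ⟨N, hN⟩ := (hBfin.image nf).bddAbove
  refine ⟨N, fun b hb => ?_⟩
  obtain ⟨c, hc, hcb⟩ := hnf b hb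
  exact ⟨c, F.gIter_mono (hN ⟨b, hb, rfl⟩) hc, hcb⟩

lemma gnd_fixed (F : ArgFramework α) : F.fchar F.gnd = F.gnd := by
  apply Set.Subset.antisymm
  · rintro a ⟨ha, hacc⟩
    obtain ⟨N, hN⟩ := F.acceptable_gnd hacc
    exact F.gIter_subset_gnd (N + 1) ⟨ha, hN⟩
  · refine Set.iUnion_subset fun n => ?_
    cases n with
    | zero => exact Set.empty_subset _
    | succ n => exact (fchar_mono F (F.gIter_subset_gnd n)).trans subset_rfl

lemma gnd_grounded (F : ArgFramework α) : F.GroundedExt F.gnd := by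
  refine ⟨⟨⟨F.gnd_cf, ?_⟩, ?_⟩, ?_⟩
  · intro a ha b hba
    rw [← F.gnd_fixed] at ha
    exact ha.2 b hba
  · intro a ha hacc
    exact F.gnd_fixed ▸ (⟨ha, hacc⟩ : a ∈ F.fchar F.gnd)
  · intro T hT
    have hfT : F.fchar T ⊆ T := fun a ha => hT.2 a ha.1 ha.2
    refine Set.iUnion_subset fun n => ?_
    induction n with
    | zero => exact Set.empty_subset _
    | succ n ih => exact (fchar_mono F ih).trans hfT

lemma exists_chain_seq {U : Set α} {r : α → α → Prop}
    (hstep : ∀ x ∈ U, ∃ y ∈ U, r y x) {b : α} (hb : b ∈ U) :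
    ∃ f : ℕ → α, f 0 = b ∧ (∀ n, f n ∈ U) ∧ ∀ n, r (f (n + 1)) (f n) := by
  classical
  have hg : ∀ x : {x // x ∈ U}, ∃ y : {x // x ∈ U}, r y.1 x.1 := fun x => by
    obtain ⟨y, hy, hr⟩ := hstep x.1 x.2
    exact ⟨⟨y, hy⟩, hr⟩
  choose g hgr using hg
  refine ⟨fun n => (g^[n] ⟨b, hb⟩).1, rfl, fun n => (g^[n] ⟨b, hb⟩).2, fun n => ?_⟩
  show r (g^[n + 1] ⟨b, hb⟩).1 _
  rw [Function.iterate_succ_apply']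
  exact hgr _



lemma dropLast_reverse' (l : List α) : l.reverse.dropLast = l.tail.reverse := by
  cases l with
  | nil => rfl
  | cons a l => rw [List.reverse_cons, List.dropLast_concat]; rfl

lemma chain'_desc {r : α → α → Prop} (f : ℕ → α) (hr : ∀ n, r (f (n + 1)) (f n)) (s k : ℕ) :
    List.Chain' r (((List.range (k + 1)).map (fun t => f (t + s))).reverse) := by
  show List.IsChain r _
  rw [List.isChain_reverse, List.isChain_map, show k + 1 = Nat.succ k from rfl,
    List.isChain_range_succ]
  intro m _
  show r (f (Nat.succ m + s)) (f (m + s))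
  have h := hr (m + s)
  have : Nat.succ m + s = m + s + 1 := by omega
  rw [this]
  exact h

lemma head?_desc (f : ℕ → α) (s k : ℕ) :
    (((List.range (k + 1)).map (fun t => f (t + s))).reverse).head? = some (f (k + s)) := by
  rw [List.head?_reverse, List.range_succ, List.map_append]
  simp

lemma getLast?_desc (f : ℕ → α) (s k : ℕ) :
    (((List.range (k + 1)).map (fun t => f (t + s))).reverse).getLast? = some (f s) := by
  rw [List.getLast?_reverse, List.range_succ_eq_map]
  simp

lemma mem_desc {f : ℕ → α} {s k : ℕ} {x : α}
    (hx : x ∈ ((List.range (k + 1)).map (fun t => f (t + s))).reverse) :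
    ∃ t ≤ k, x = f (t + s) := by
  rw [List.mem_reverse, List.mem_map] at hx
  obtain ⟨t, ht, rfl⟩ := hx
  rw [List.mem_range] at ht
  exact ⟨t, by omega, rfl⟩

lemma nodup_desc {f : ℕ → α} {s k : ℕ}
    (hinj : ∀ p q, s ≤ p → p < q → q ≤ s + k → f p ≠ f q) :
    (((List.range (k + 1)).map (fun t => f (t + s))).reverse).Nodup := by
  rw [List.nodup_reverse]
  refine List.Nodup.map_on ?_ List.nodup_range
  intro p hp q hq he
  rw [List.mem_range] at hp hq
  by_contra hne
  rcases Nat.lt_or_ge p q with h | h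
  · exact hinj (p + s) (q + s) (by omega) (by omega) (by omega) he
  · have h' : q < p := by omega
    exact hinj (q + s) (p + s) (by omega) (by omega) (by omega) he.symm

lemma nodup_dropLast_desc {f : ℕ → α} {s k : ℕ}
    (hinj : ∀ p q, s + 1 ≤ p → p < q → q ≤ s + k → f p ≠ f q) :
    ((((List.range (k + 1)).map (fun t => f (t + s))).reverse).dropLast).Nodup := by
  rw [dropLast_reverse', ← List.map_tail, List.range_succ_eq_map, List.tail_cons,
    List.map_map, List.nodup_reverse]
  refine List.Nodup.map_on ?_ List.nodup_range
  intro p hp q hq he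
  rw [List.mem_range] at hp hq
  simp only [Function.comp] at he
  by_contra hne
  rcases Nat.lt_or_ge p q with h | h
  · exact hinj (Nat.succ p + s) (Nat.succ q + s) (by omega) (by omega) (by omega) he
  · have h' : q < p := by omega
    exact hinj (Nat.succ q + s) (Nat.succ p + s) (by omega) (by omega) (by omega) he.symm

lemma length_desc (f : ℕ → α) (s k : ℕ) :
    (((List.range (k + 1)).map (fun t => f (t + s))).reverse).length = k + 1 := by
  simp


lemma new_decided (F F' : ArgFramework α) (hRM : F.RationalManExpansion F')
    (hsub : F'.gnd ⊆ F.args) {b : α} (hb : b ∈ F'.args) (hbnew : b ∉ F.args) :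
    ∃ c ∈ F'.gnd, (c, b) ∈ F'.att := by
  classical
  by_contra hcon
  push_neg at hcon
  set U : Set α := {x | x ∈ F'.args ∧ x ∉ F'.gnd ∧ ∀ c ∈ F'.gnd, (c, x) ∉ F'.att} with hU
  have hbU : b ∈ U := ⟨hb, fun h => hbnew (hsub h), fun c hc => hcon c hc⟩
  have hstep : ∀ x ∈ U, ∃ y ∈ U, (y, x) ∈ F'.att := by
    rintro x ⟨hx, hxg, hxatt⟩
    have hnacc : ¬ F'.Acceptable F'.gnd x := by
      intro hacc
      exact hxg (F'.gnd_fixed ▸ (⟨hx, hacc⟩ : x ∈ F'.fchar F'.gnd))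
    rw [Acceptable] at hnacc
    push_neg at hnacc
    obtain ⟨y, hyx, hy⟩ := hnacc
    have hyargs : y ∈ F'.args := (F'.att_sub hyx).1
    have hyg : y ∉ F'.gnd := fun h => hxatt y h hyx
    exact ⟨y, ⟨hyargs, hyg, fun c hc hcy => hy c hc hcy⟩, hyx⟩
  obtain ⟨f, hf0, hfU, hfr⟩ := exists_chain_seq hstep hbU
  have hninj : ¬ Function.Injective f := fun hinj =>
    (Set.infinite_of_injective_forall_mem hinj fun n => (hfU n).1) F'.args_finite
  have hrep : ∃ j, ∃ i, i < j ∧ f i = f j := by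
    rw [Function.Injective] at hninj
    push_neg at hninj
    obtain ⟨p, q, hpq, hne⟩ := hninj
    rcases Nat.lt_or_ge p q with h | h
    · exact ⟨q, p, h, hpq⟩
    · exact ⟨p, q, by omega, hpq.symm⟩
  classical
  obtain ⟨i, hij, hfij⟩ := Nat.find_spec hrep
  set j := Nat.find hrep with hj
  have hmin : ∀ p q, p < q → q < j → f p ≠ f q := by
    intro p q hpq hq he
    exact Nat.find_min hrep hq ⟨p, hpq, he⟩
  set cyc : List α := ((List.range (j - i + 1)).map (fun t => f (t + i))).reverse with hcyc
  set pth : List α := ((List.range (i + 1)).map (fun t => f (t + 0))).reverse with hpth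
  have hmemU : ∀ x ∈ cyc, x ∈ U := by
    intro x hx
    obtain ⟨t, _, rfl⟩ := mem_desc hx
    exact hfU _
  have hcycle : F'.AttackCycle cyc := by
    refine ⟨?_, fun x hx => (hmemU x hx).1, chain'_desc f hfr i (j - i), ?_, ?_⟩
    · rw [hcyc, length_desc]; omega
    · rw [hcyc, head?_desc, getLast?_desc]
      have : j - i + i = j := by omega
      rw [this, ← hfij]
    · refine nodup_dropLast_desc ?_
      intro p q hp hpq hq he
      rcases Nat.lt_or_ge q j with h | h
      · exact hmin p q hpq h he
      · have hqj : q = j := by omega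
        subst hqj
        exact hmin i p (by omega) (by omega) (he ▸ hfij.symm ▸ rfl)
  have hseq : F'.AttackSeq pth := by
    refine ⟨?_, ?_, ?_, chain'_desc f hfr 0 i⟩
    · intro h
      have := congrArg List.length h
      rw [hpth, length_desc] at this
      simp at this
    · refine nodup_desc ?_
      intro p q _ hpq hq
      exact hmin p q hpq (by omega)
    · intro x hx
      obtain ⟨t, _, rfl⟩ := mem_desc hx
      exact (hfU _).1
  have hreach : F'.Reachable (f i) b := by
    refine ⟨pth, hseq, ?_, ?_⟩
    · rw [hpth, head?_desc]
      rw [Nat.add_zero]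
    · rw [hpth, getLast?_desc, hf0]
  have hficyc : f i ∈ cyc := by
    rw [hcyc, List.mem_reverse, List.mem_map]
    exact ⟨0, by simp, by rw [Nat.zero_add]⟩
  have hfiold : f i ∈ F.args :=
    ((hRM.2.1.2.2 cyc).mp hcycle).2.1 (f i) hficyc
  exact hRM.2.2 (f i) hfiold b ⟨hb, hbnew⟩ hreach cyc hcycle hficyc

end ArgFramework

/-- Rational man's expansions preserve weak reference
independence for grounded semantics: for every rational man's expansion and
every grounded extension `E` of the original framework, there is a grounded
extension `E'` of the expansion with `E' ⊄ AR` or `E' = E`. -/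
theorem rational_man_expansion_grounded_weak_reference_independence
    {α : Type*} (F F' : ArgFramework α)
    (hRM : F.RationalManExpansion F') :
    ∀ E, F.GroundedExt E →
      ∃ E', F'.GroundedExt E' ∧ (¬ E' ⊆ F.args ∨ E' = E) := by
  classical
  intro E hE
  refine ⟨F'.gnd, F'.gnd_grounded, ?_⟩
  by_cases hsub : F'.gnd ⊆ F.args
  · right
    have hattF : F.att ⊆ F'.att := hRM.1.2.1
    have hnew : ∀ a b, (a, b) ∈ F'.att → a ∈ F.args → b ∈ F.args → (a, b) ∈ F.att := by
      intro a b hab ha hb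
      by_contra h
      exact hRM.1.2.2 a b hab h ⟨ha, hb⟩
    apply Set.Subset.antisymm
    · -- gnd F' ⊆ E, by induction on iterates
      refine Set.iUnion_subset ?_
      intro n
      induction n with
      | zero => exact Set.empty_subset _
      | succ n ih =>
        rintro a ⟨haargs, hacc⟩
        have hagnd : a ∈ F'.gnd := F'.gIter_subset_gnd (n + 1) ⟨haargs, hacc⟩
        refine hE.1.2 a (hsub hagnd) ?_
        intro bb hba
        obtain ⟨c, hc, hcb⟩ := hacc bb (hattF hba)
        have hcold : c ∈ F.args := hsub (F'.gIter_subset_gnd n hc)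
        exact ⟨c, ih hc, hnew c bb hcb hcold (F.att_sub hba).1⟩
    · -- E ⊆ gnd F': gnd F' is complete in F
      refine hE.2 _ ?_
      have hgc := F'.gnd_grounded.1
      refine ⟨⟨⟨hsub, ?_⟩, ?_⟩, ?_⟩
      · intro a ha bb hb hab
        exact hgc.1.1.2 a ha bb hb (hattF hab)
      · intro a ha bb hba
        obtain ⟨c, hc, hcb⟩ := hgc.1.2 a ha bb (hattF hba)
        exact ⟨c, hc, hnew c bb hcb (hsub hc) (F.att_sub hba).1⟩
      · intro a haargs hacc
        refine hgc.2 a (hRM.1.1 haargs) ?_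
        intro bb hba
        by_cases hbold : bb ∈ F.args
        · obtain ⟨c, hc, hcb⟩ := hacc bb (hnew bb a hba hbold haargs)
          exact ⟨c, hc, hattF hcb⟩
        · exact ArgFramework.new_decided F F' hRM hsub (F'.att_sub hba).1 hbold
  · left
    exact hsub
end

section
/- Rational man's expansions preserve weak reference independence for preferred semantics: for every two argumentation frameworks AF = (AR, Attacks) and AF' = (AR', Attacks') such that AF' is a rational man's expansion of AF (AF ≼_RM AF'), and for every preferred extension E of AF, there exists a preferred extension E' of AF' such that E' ⊄ AR or E' = E. -/
section Auxiliary

open List Relation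

variable {α : Type*}

namespace ArgFramework

/-- The set of arguments of `F'` that are new or reach a new argument. -/
def NewA (F F' : ArgFramework α) : Set α :=
  {x | x ∈ F'.args ∧ (x ∉ F.args ∨ ∃ b, b ∈ F'.args ∧ b ∉ F.args ∧ F'.Reachable x b)}

/-- `y` attacks `x` in `F'` and `x` is in the ancestor set. -/
def ltRel (F F' : ArgFramework α) (y x : α) : Prop :=
  (y, x) ∈ F'.att ∧ x ∈ NewA F F'

variable {F F' : ArgFramework α}

lemma newA_sub : NewA F F' ⊆ F'.args := fun _ hx => hx.1

lemma att_mem_args {a b : α} (h : (a, b) ∈ F.att) : a ∈ F.args ∧ b ∈ F.args :=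
  F.att_sub h

/-- Attacks between old arguments in `F'` were already attacks in `F`. -/
lemma att_of_old (hN : F.NormalExpansion F') {a b : α} (h : (a, b) ∈ F'.att)
    (ha : a ∈ F.args) (hb : b ∈ F.args) : (a, b) ∈ F.att := by
  by_contra hn
  exact hN.2.2 a b h hn ⟨ha, hb⟩

/-- `NewA` is closed under attackers. -/
lemma newA_closed (_hN : F.NormalExpansion F') {y x : α}
    (hatt : (y, x) ∈ F'.att) (hx : x ∈ NewA F F') : y ∈ NewA F F' := by
  have hy' : y ∈ F'.args := (F'.att_sub hatt).1
  by_cases hyF : y ∈ F.args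
  · rcases hx.2 with hnew | ⟨b, hb1, hb2, l, hseq, hhead, hlast⟩
    · -- x is new, so y ≠ x and [y, x] is an attack sequence
      have hne : y ≠ x := fun h => hnew (h ▸ hyF)
      refine ⟨hy', Or.inr ⟨x, hx.1, hnew, [y, x],
        ⟨by simp, by simp [hne], ?_, List.isChain_pair.2 hatt⟩, rfl, by simp⟩⟩
      intro a ha
      rcases List.mem_pair.1 ha with rfl | rfl
      · exact hy'
      · exact hx.1
    · by_cases hyl : y ∈ l
      · obtain ⟨s, t, rfl⟩ := List.append_of_mem hyl
        refine ⟨hy', Or.inr ⟨b, hb1, hb2, y :: t,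
          ⟨List.cons_ne_nil _ _, hseq.2.1.sublist (List.sublist_append_right s _),
            fun a ha => hseq.2.2.1 a (List.mem_append_right s ha),
            hseq.2.2.2.suffix ⟨s, rfl⟩⟩, rfl, ?_⟩⟩
        rw [← hlast, List.getLast?_append_of_ne_nil _ (List.cons_ne_nil _ _)]
      · have hlne : l ≠ [] := hseq.1
        refine ⟨hy', Or.inr ⟨b, hb1, hb2, y :: l,
          ⟨List.cons_ne_nil _ _, List.nodup_cons.2 ⟨hyl, hseq.2.1⟩,
            ?_, List.isChain_cons.2 ⟨?_, hseq.2.2.2⟩⟩, rfl, ?_⟩⟩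
        · intro a ha
          rcases List.mem_cons.1 ha with rfl | ha
          · exact hy'
          · exact hseq.2.2.1 a ha
        · intro z hz
          rw [hhead, Option.mem_some_iff] at hz
          exact hz ▸ hatt
        · rw [show (y :: l) = [y] ++ l from rfl,
            List.getLast?_append_of_ne_nil _ hlne]
          exact hlast
  · exact ⟨hy', Or.inl hyF⟩

lemma dup_split {x : α} : ∀ (l : List α), [x, x] <+ l →
    ∃ l₁ l₂ l₃, l = l₁ ++ x :: (l₂ ++ x :: l₃)
  | [], h => by simp at h
  | a :: l, h => by
    cases h with
    | cons _ h' =>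
      obtain ⟨l₁, l₂, l₃, rfl⟩ := dup_split l h'
      exact ⟨a :: l₁, l₂, l₃, rfl⟩
    | cons_cons _ h' =>
      obtain ⟨s, t, rfl⟩ := List.append_of_mem (List.singleton_sublist.1 h')
      exact ⟨[], s, t, rfl⟩

/-- A closed walk through the ancestor set of new arguments. -/
def IsClosedWalk (F' : ArgFramework α) (A : Set α) (l : List α) : Prop :=
  2 ≤ l.length ∧ (∀ a ∈ l, a ∈ A) ∧
    l.Chain' (fun a b => (a, b) ∈ F'.att) ∧ l.head? = l.getLast?

lemma no_closed_walk (hRM : F.RationalManExpansion F') :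
    ∀ l, ¬ IsClosedWalk F' (NewA F F') l := by
  by_contra h
  push_neg at h
  obtain ⟨l₀, hl₀⟩ := h
  classical
  have hex : ∃ n, ∃ l, IsClosedWalk F' (NewA F F') l ∧ l.length = n :=
    ⟨l₀.length, l₀, hl₀, rfl⟩
  obtain ⟨l, hl, hlen⟩ := Nat.find_spec hex
  -- minimality gives nodup of dropLast
  have hnodup : l.dropLast.Nodup := by
    by_contra hnd
    obtain ⟨x, hdup⟩ := (List.exists_duplicate_iff_not_nodup.2 hnd)
    obtain ⟨l₁, l₂, l₃, heq⟩ := dup_split _ (List.duplicate_iff_sublist.1 hdup)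
    have hlne : l ≠ [] := by
      intro h; rw [h] at hl; simp [IsClosedWalk] at hl
    obtain ⟨z, hzl⟩ : ∃ z, l.getLast? = some z := by
      cases l with
      | nil => exact absurd rfl hlne
      | cons a l => exact ⟨_, List.getLast?_cons⟩
    have hl2 : l.dropLast ++ [z] = l := List.dropLast_append_getLast? z hzl
    have hldec : l = l₁ ++ x :: (l₂ ++ x :: (l₃ ++ [z])) := by
      conv_lhs => rw [← hl2, heq]
      simp
    set w : List α := x :: (l₂ ++ [x]) with hw
    have hinfix : w <:+: l := by
      refine ⟨l₁, l₃ ++ [z], ?_⟩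
      rw [hldec]; simp [hw]
    have hwwalk : IsClosedWalk F' (NewA F F') w := by
      refine ⟨by simp [hw], fun a ha => hl.2.1 a (hinfix.subset ha), ?_, ?_⟩
      · exact hl.2.2.1.infix hinfix
      · rw [hw]
        rw [show x :: (l₂ ++ [x]) = (x :: l₂) ++ [x] from rfl,
          List.getLast?_append_of_ne_nil _ (List.cons_ne_nil _ _)]
        simp
    have hwlt : w.length < Nat.find hex := by
      rw [← hlen, hldec]
      simp [hw]
      omega
    exact Nat.find_min hex hwlt ⟨w, hwwalk, rfl⟩
  have hcyc' : F'.AttackCycle l :=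
    ⟨hl.1, fun a ha => newA_sub (hl.2.1 a ha), hl.2.2.1, hl.2.2.2, hnodup⟩
  have hcyc : F.AttackCycle l := (hRM.2.1.2.2 l).1 hcyc'
  have hlne : l ≠ [] := by
    intro h; rw [h] at hl; simp [IsClosedWalk] at hl
  set z := l.head hlne with hz
  have hzl : z ∈ l := List.head_mem hlne
  have hzA : z ∈ NewA F F' := hl.2.1 z hzl
  have hzF : z ∈ F.args := hcyc.2.1 z hzl
  rcases hzA.2 with h | ⟨b, hb1, hb2, hreach⟩
  · exact h hzF
  · exact (hRM.2.2 z hzF b ⟨hb1, hb2⟩ hreach l hcyc') hzl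

lemma ltRel_wf (hRM : F.RationalManExpansion F') : WellFounded (ltRel F F') := by
  classical
  have hAfin : (NewA F F').Finite := F'.args_finite.subset newA_sub
  haveI : Finite (NewA F F') := hAfin
  set A := NewA F F' with hA
  let r : A → A → Prop := fun y x => ltRel F F' y.1 x.1
  have key : ∀ {a b : A}, Relation.TransGen r a b →
      ∃ l : List α, 2 ≤ l.length ∧ (∀ c ∈ l, c ∈ A) ∧
        l.Chain' (fun a b => (a, b) ∈ F'.att) ∧
        l.head? = some a.1 ∧ l.getLast? = some b.1 := by
    intro a b h
    induction h with
    | @single b' h =>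
      refine ⟨[a.1, b'.1], by simp, ?_, List.isChain_pair.2 h.1, rfl, by simp⟩
      intro c hc
      rcases List.mem_pair.1 hc with rfl | rfl
      · exact a.2
      · exact b'.2
    | @tail b' c hab hbc ih =>
      obtain ⟨l, h1, h2, h3, h4, h5⟩ := ih
      refine ⟨l ++ [c.1], by simp; omega, ?_, ?_, ?_, ?_⟩
      · intro d hd
        rcases List.mem_append.1 hd with hd | hd
        · exact h2 d hd
        · rw [List.mem_singleton] at hd; exact hd ▸ c.2
      · refine List.IsChain.append h3 (List.isChain_singleton _) ?_
        intro u hu v hv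
        rw [h5, Option.mem_some_iff] at hu
        simp only [List.head?_cons, Option.mem_some_iff] at hv
        rw [← hu, ← hv] at *
        exact hu ▸ hv ▸ hbc.1
      · rw [List.head?_append, h4]; rfl
      · rw [List.getLast?_append_of_ne_nil _ (List.cons_ne_nil _ _)]; simp
  have hirr : ∀ x : A, ¬ Relation.TransGen r x x := by
    intro x hx
    obtain ⟨l, h1, h2, h3, h4, h5⟩ := key hx
    exact no_closed_walk hRM l ⟨h1, h2, h3, by rw [h4, h5]⟩
  haveI : IsIrrefl A (Relation.TransGen r) := ⟨hirr⟩
  have hwfT : WellFounded (Relation.TransGen r) :=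
    Finite.wellFounded_of_trans_of_irrefl _
  have hwfr : WellFounded r :=
    Subrelation.wf (fun h => Relation.TransGen.single h) hwfT
  constructor
  intro x
  by_cases hx : x ∈ A
  · have main : ∀ p : A, Acc r p → Acc (ltRel F F') p.1 := by
      intro p hp
      induction hp with
      | intro p hp ih =>
        refine Acc.intro _ fun y hy => ?_
        have hyA : y ∈ A := newA_closed hRM.1 hy.1 p.2
        exact ih ⟨y, hyA⟩ hy
    exact main ⟨x, hx⟩ (hwfr.apply _)
  · exact Acc.intro _ fun y hy => absurd hy.2 hx

variable (F F')

/-- The unique "grounded" labelling on the ancestor set, defined by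
well-founded recursion: a member iff all of its attackers are non-members. -/
def Gset (wf : WellFounded (ltRel F F')) : α → Prop :=
  wf.fix (fun x IH => x ∈ NewA F F' ∧ ∀ y, ∀ h : ltRel F F' y x, ¬ IH y h)

variable {F F'}

lemma Gset_iff (wf : WellFounded (ltRel F F')) (x : α) :
    Gset F F' wf x ↔ x ∈ NewA F F' ∧ ∀ y, ltRel F F' y x → ¬ Gset F F' wf y := by
  have h := WellFounded.fix_eq wf
    (fun x IH => x ∈ NewA F F' ∧ ∀ y, ∀ h : ltRel F F' y x, ¬ IH y h) x
  constructor
  · intro hx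
    rw [Gset] at hx
    rw [h] at hx
    exact ⟨hx.1, fun y hy => hx.2 y hy⟩
  · intro hx
    rw [Gset, h]
    exact ⟨hx.1, fun y hy => hx.2 y hy⟩

/-- Every admissible set extends to a preferred extension (finiteness). -/
lemma exists_preferred_superset (F : ArgFramework α) {S : Set α}
    (hS : F.Admissible S) : ∃ E, F.PreferredExt E ∧ S ⊆ E := by
  classical
  have hfin : {T | F.Admissible T ∧ S ⊆ T}.Finite :=
    (F.args_finite.finite_subsets).subset (fun T hT => hT.1.1.1)
  have hne : {T | F.Admissible T ∧ S ⊆ T}.Nonempty := ⟨S, hS, subset_rfl⟩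
  obtain ⟨E, hE, hmax⟩ := Set.Finite.exists_maximalFor id _ hfin hne
  exact ⟨E, ⟨hE.1, fun T hT hET => Set.Subset.antisymm hET (hmax (j := T) ⟨hT, hE.2.trans hET⟩ hET)⟩, hE.2⟩

/-- An admissible set of a normal expansion contained in the old arguments is
admissible in the original framework. -/
lemma admissible_restrict (hN : F.NormalExpansion F') {S : Set α}
    (hS : F'.Admissible S) (hsub : S ⊆ F.args) : F.Admissible S := by
  obtain ⟨⟨_, hcf⟩, hdef⟩ := hS
  refine ⟨⟨hsub, fun a ha b hb hab => hcf a ha b hb (hN.2.1 hab)⟩, ?_⟩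
  intro a ha b hba
  obtain ⟨c, hc, hcb⟩ := hdef a ha b (hN.2.1 hba)
  have hbF : b ∈ F.args := (F.att_sub hba).1
  by_cases h : (c, b) ∈ F.att
  · exact ⟨c, hc, h⟩
  · exact absurd ⟨hsub hc, hbF⟩ (hN.2.2 c b hcb h)

end ArgFramework

end Auxiliary


/-- Rational man's expansions preserve weak reference
independence for preferred semantics: for every rational man's expansion and
every preferred extension `E` of the original framework, there is a preferred
extension `E'` of the expansion with `E' ⊄ AR` or `E' = E`. -/
theorem rational_man_expansion_preferred_weak_reference_independence
    {α : Type*} (F F' : ArgFramework α)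
    (hRM : F.RationalManExpansion F') :
    ∀ E, F.PreferredExt E →
      ∃ E', F'.PreferredExt E' ∧ (¬ E' ⊆ F.args ∨ E' = E) := by
  classical
  intro E hE
  obtain ⟨⟨⟨hEsub, hEcf⟩, hEdef⟩, hEmax⟩ := hE
  have hN := hRM.1
  have wf := ArgFramework.ltRel_wf hRM
  set G : α → Prop := ArgFramework.Gset F F' wf with hGdef
  have hG_A : ∀ x, G x → x ∈ F.NewA F' := fun x hx =>
    ((ArgFramework.Gset_iff wf x).1 hx).1
  have hG_att : ∀ x, G x → ∀ y, (y, x) ∈ F'.att → ¬ G y := fun x hx y hy =>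
    ((ArgFramework.Gset_iff wf x).1 hx).2 y ⟨hy, hG_A x hx⟩
  have hG_def : ∀ x ∈ F.NewA F', ¬ G x → ∃ y, G y ∧ (y, x) ∈ F'.att := by
    intro x hxA hxG
    rw [hGdef, ArgFramework.Gset_iff] at hxG
    push_neg at hxG
    obtain ⟨y, hy, hyG⟩ := hxG hxA
    exact ⟨y, hyG, hy.1⟩
  have hGargs : {x | G x} ⊆ F'.args := fun x hx =>
    ArgFramework.newA_sub (hG_A x hx)
  have hGadm : F'.Admissible {x | G x} := by
    refine ⟨⟨hGargs, fun a ha b hb hab => hG_att b hb a hab ha⟩, ?_⟩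
    intro a ha b hba
    have hbA : b ∈ F.NewA F' := ArgFramework.newA_closed hN hba (hG_A a ha)
    obtain ⟨c, hc, hcb⟩ := hG_def b hbA (hG_att a ha b hba)
    exact ⟨c, hc, hcb⟩
  by_cases hGold : ∀ x, G x → x ∈ F.args
  · -- G consists of old arguments: E ∪ G is admissible in F'
    have claimC : ∀ g, G g → ∀ e ∈ E, (e, g) ∉ F'.att := by
      intro g
      refine (wf.transGen).induction
        (C := fun g => G g → ∀ e ∈ E, (e, g) ∉ F'.att) g ?_
      intro x IH hx e he hatt
      have hxA := hG_A x hx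
      have heA : e ∈ F.NewA F' := ArgFramework.newA_closed hN hatt hxA
      obtain ⟨h, hhG, hhe⟩ := hG_def e heA (hG_att x hx e hatt)
      have hheF : (h, e) ∈ F.att :=
        ArgFramework.att_of_old hN hhe (hGold h hhG) (hEsub he)
      obtain ⟨f, hf, hfh⟩ := hEdef e he h hheF
      exact IH h (Relation.TransGen.tail (Relation.TransGen.single ⟨hhe, heA⟩)
        ⟨hatt, hxA⟩) hhG f hf (hN.2.1 hfh)
    have hEGadm : F'.Admissible (E ∪ {x | G x}) := by
      constructor
      · constructor
        · rintro x (hx | hx)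
          · exact hN.1 (hEsub hx)
          · exact hGargs hx
        · rintro a (ha | ha) b (hb | hb) hab
          · exact hEcf a ha b hb
              (ArgFramework.att_of_old hN hab (hEsub ha) (hEsub hb))
          · exact claimC b hb a ha hab
          · obtain ⟨f, hf, hfa⟩ := hEdef b hb a
              (ArgFramework.att_of_old hN hab (hGold a ha) (hEsub hb))
            exact claimC a ha f hf (hN.2.1 hfa)
          · exact hG_att b hb a hab ha
      · rintro a (ha | ha) b hba
        · by_cases hbF : b ∈ F.args
          · obtain ⟨c, hc, hcb⟩ := hEdef a ha b
              (ArgFramework.att_of_old hN hba hbF (hEsub ha))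
            exact ⟨c, Or.inl hc, hN.2.1 hcb⟩
          · have hbA : b ∈ F.NewA F' := ⟨(F'.att_sub hba).1, Or.inl hbF⟩
            have hbG : ¬ G b := fun h => hbF (hGold b h)
            obtain ⟨c, hc, hcb⟩ := hG_def b hbA hbG
            exact ⟨c, Or.inr hc, hcb⟩
        · have hbA := ArgFramework.newA_closed hN hba (hG_A a ha)
          obtain ⟨c, hc, hcb⟩ := hG_def b hbA (hG_att a ha b hba)
          exact ⟨c, Or.inr hc, hcb⟩
    obtain ⟨E', hE', hsub⟩ := ArgFramework.exists_preferred_superset F' hEGadm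
    by_cases hE'F : E' ⊆ F.args
    · refine ⟨E', hE', Or.inr ?_⟩
      exact (hEmax E' (ArgFramework.admissible_restrict hN hE'.1 hE'F)
        (fun x hx => hsub (Or.inl hx))).symm
    · exact ⟨E', hE', Or.inl hE'F⟩
  · -- some member of G is a new argument
    push_neg at hGold
    obtain ⟨x, hxG, hxF⟩ := hGold
    obtain ⟨E', hE', hsub⟩ := ArgFramework.exists_preferred_superset F' hGadm
    exact ⟨E', hE', Or.inl fun h => hxF (h (hsub hxG))⟩
end

section
/- Let AF = (AR, Attacks) and AF' = (AR', Attacks') be argumentation frameworks with AF ≼_N AF', and let 𝒮 be a family of maximal admissible sets of AF and 𝒮' a family of maximal admissible sets of AF'. If for every E ∈ 𝒮 there exists E' ∈ 𝒮' with E ⊆ E' (the weak monotony condition), then for every E ∈ 𝒮 there exists E' ∈ 𝒮' such that E' ⊄ AR or E' = E (the weak reference independence condition). -/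
/-- For families of maximal admissible sets of `AF` and of a
normal expansion `AF'`, the weak monotony condition implies the weak
reference independence condition. -/
theorem weak_monotony_implies_weak_reference_independence_admissible
    {α : Type*} (F F' : ArgFramework α)
    (hN : F.NormalExpansion F')
    (S S' : Set (Set α))
    (hS : ∀ E ∈ S, F.MaxAdmissible E)
    (hS' : ∀ E' ∈ S', F'.MaxAdmissible E')
    (hWM : ∀ E ∈ S, ∃ E' ∈ S', E ⊆ E') :
    ∀ E ∈ S, ∃ E' ∈ S', ¬ E' ⊆ F.args ∨ E' = E := by
  intro E hE
  obtain ⟨E', hE'S, hsub⟩ := hWM E hE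
  refine ⟨E', hE'S, ?_⟩
  by_cases hEa : E' ⊆ F.args
  · right
    obtain ⟨hAdm', _⟩ := hS' E' hE'S
    obtain ⟨hAdmE, hMaxE⟩ := hS E hE
    obtain ⟨hN1, hN2, hN3⟩ := hN
    -- E' is admissible in F
    have hAdmF : F.Admissible E' := by
      constructor
      · refine ⟨hEa, fun a ha b hb hab => hAdm'.1.2 a ha b hb (hN2 hab)⟩
      · intro a ha b hba
        obtain ⟨c, hc, hcb⟩ := hAdm'.2 a ha b (hN2 hba)
        refine ⟨c, hc, ?_⟩
        by_contra hnot
        exact hN3 c b hcb hnot ⟨hEa hc, (F.att_sub hba).1⟩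
    exact (hMaxE E' hAdmF hsub).symm
  · left; exact hEa
end
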